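/- Let S(h) = I − r·h + O(h²) be a formal power series in h with coefficients in the m²×m² complex matrices, whose constant term is the identity and whose linear coefficient is −r, set R(h) := P·S(h), and let q = q(h) := exp(−h), a formal power series with complex coefficients. If (q·I − R(h))(q⁻¹·I + R(h)) = 0 as an identity of formal power series, then r₁₂ + r₂₁ = 2P, i.e. r + PrP = 2P; equivalently the symmetric part r₊ = (r₁₂ + r₂₁)/2 of the classical r-matrix of a Hecke symmetry equals P. -/

import Mathlib

/-- The matrix of the flip operator `P(x ⊗ y) = y ⊗ x` on `ℂ^m ⊗ ℂ^m`. -/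
def flipMat (m : ℕ) : Matrix (Fin m × Fin m) (Fin m × Fin m) ℂ :=
  Matrix.of fun p q => if p.1 = q.2 ∧ p.2 = q.1 then 1 else 0

/-- The formal power series `exp(−h)·I` with `m²×m²` matrix coefficients. -/
noncomputable def expNegSeries (m : ℕ) :
    PowerSeries (Matrix (Fin m × Fin m) (Fin m × Fin m) ℂ) :=
  PowerSeries.mk fun n => (((-1 : ℂ) ^ n / n.factorial) •
    (1 : Matrix (Fin m × Fin m) (Fin m × Fin m) ℂ))

/-- The formal power series `exp(h)·I` with `m²×m²` matrix coefficients. -/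
noncomputable def expPosSeries (m : ℕ) :
    PowerSeries (Matrix (Fin m × Fin m) (Fin m × Fin m) ℂ) :=
  PowerSeries.mk fun n => (((1 : ℂ) / n.factorial) •
    (1 : Matrix (Fin m × Fin m) (Fin m × Fin m) ℂ))

lemma flip_sq (m : ℕ) : flipMat m * flipMat m = 1 := by
  ext p q
  simp only [flipMat, Matrix.mul_apply, Matrix.of_apply, Matrix.one_apply]
  rw [Fintype.sum_prod_type]
  simp [Prod.ext_iff, ite_and, Finset.sum_ite_eq, and_comm]

/-- If `S(h) = I − r·h + O(h²)`, `R(h) = P·S(h)`, `q = exp(−h)`, and the Hecke condition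
`(q·I − R(h))(q⁻¹·I + R(h)) = 0` holds as a formal power series, then `r₁₂ + r₂₁ = 2P`:
the symmetric part of the classical `r`-matrix of a Hecke symmetry equals `P`. -/
theorem classical_rmatrix_symmetric_part_of_hecke (m : ℕ) (hm : 1 ≤ m)
    (r : Matrix (Fin m × Fin m) (Fin m × Fin m) ℂ)
    (S : PowerSeries (Matrix (Fin m × Fin m) (Fin m × Fin m) ℂ))
    (h0 : PowerSeries.coeff 0 S = 1)
    (h1 : PowerSeries.coeff 1 S = -r)
    (hHecke : (expNegSeries m - PowerSeries.mk fun n => flipMat m * PowerSeries.coeff n S) *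
        (expPosSeries m + PowerSeries.mk fun n => flipMat m * PowerSeries.coeff n S) = 0) :
    r + flipMat m * r * flipMat m = (2 : ℂ) • flipMat m := by
  have hc := congrArg (PowerSeries.coeff 1) hHecke
  rw [PowerSeries.coeff_mul,
    show (Finset.HasAntidiagonal.antidiagonal 1 : Finset (ℕ × ℕ)) = ({(0, 1), (1, 0)} : Finset (ℕ × ℕ)) from rfl] at hc
  rw [Finset.sum_insert (by simp), Finset.sum_singleton] at hc
  simp only [map_sub, map_add, expNegSeries, expPosSeries, PowerSeries.coeff_mk, h0, h1] at hc
  norm_num at hc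
  have e1 : (1 - flipMat m) * (1 + -(flipMat m * r)) =
      1 - flipMat m * r - flipMat m + flipMat m * flipMat m * r := by noncomm_ring
  have e2 : (-1 + flipMat m * r) * (1 + flipMat m) =
      -1 - flipMat m + flipMat m * r + flipMat m * r * flipMat m := by noncomm_ring
  rw [e1, e2, flip_sq, one_mul] at hc
  rw [two_smul]
  have h2 : r + flipMat m * r * flipMat m - (flipMat m + flipMat m) = 0 := by
    rw [← hc]; abel
  exact sub_eq_zero.mp h2
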